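/- Let p ≥ 5 be a prime. Then H_{⌊p/3⌋} ≡ -(3/2)*q_p(3) (mod p), where H_n is the n-th harmonic number and q_p(3) = (3^{p-1}-1)/p. -/

import Mathlib

open Finset

private lemma aux_prod_one_add {R : Type*} [CommRing R] (c : R) (hc : c * c = 0)
    (s : Finset ℕ) (u : ℕ → R) :
    ∏ j ∈ s, (1 + c * u j) = 1 + c * ∑ j ∈ s, u j := by
  induction s using Finset.cons_induction with
  | empty => simp
  | cons x s hx ih =>
    rw [Finset.prod_cons, ih, Finset.sum_cons]
    linear_combination (u x * ∑ j ∈ s, u j) * hc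

theorem stmt_6 (p : ℕ) [Fact p.Prime] (hp5 : 5 ≤ p) :
    ∑ j ∈ Finset.Icc 1 (p / 3), ((j : ZMod p))⁻¹
      = -(3 * (2 : ZMod p)⁻¹) * (((3 ^ (p - 1) - 1) / p : ℕ) : ZMod p) := by
  have hp' : p.Prime := Fact.out
  haveI : NeZero (p ^ 2) := ⟨pow_ne_zero 2 hp'.ne_zero⟩
  have hp2 : ¬ p ∣ 2 := fun h => by have := Nat.le_of_dvd (by norm_num) h; omega
  have hp3 : ¬ p ∣ 3 := fun h => by have := Nat.le_of_dvd (by norm_num) h; omega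
  set m := p / 3 with hm
  have hdm := Nat.div_add_mod p 3
  have hmod : p % 3 ≠ 0 := by
    intro h
    rcases hp'.eq_one_or_self_of_dvd 3 (Nat.dvd_of_mod_eq_zero h) with h | h <;> omega
  have hmlt : p % 3 < 3 := Nat.mod_lt _ (by norm_num)
  have h3m : 3 * m < p := by omega
  have h3m' : p < 3 * m + 3 := by omega
  have hm1 : 1 ≤ m := by omega
  set I := Finset.Ico 1 p with hI
  -- basic divisibility facts
  have hpj : ∀ j ∈ I, ¬ p ∣ 3 * j := by
    intro j hj hd
    rw [hI, Finset.mem_Ico] at hj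
    rcases (Nat.Prime.dvd_mul hp').1 hd with h | h
    · exact hp3 h
    · have := Nat.le_of_dvd (by omega) h; omega
  have hcop : ∀ j ∈ I, Nat.Coprime (3 * j % p) (p ^ 2) := by
    intro j hj
    refine Nat.Coprime.pow_right _ (Nat.Coprime.symm ((hp'.coprime_iff_not_dvd).2 ?_))
    intro hd
    exact hpj j hj ((Nat.dvd_mod_iff dvd_rfl).1 hd)
  have hunit_r : ∀ j ∈ I, IsUnit ((3 * j % p : ℕ) : ZMod (p ^ 2)) := fun j hj =>
    (ZMod.isUnit_iff_coprime _ _).2 (hcop j hj)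
  have hpp : (p : ZMod (p ^ 2)) * p = 0 := by
    rw [← Nat.cast_mul, ZMod.natCast_eq_zero_iff]
    exact dvd_of_eq (sq p)
  -- the lift of each factor
  have hlift : ∀ j ∈ I, ((3 * j : ℕ) : ZMod (p ^ 2))
      = ((3 * j % p : ℕ) : ZMod (p ^ 2)) *
        (1 + (p : ZMod (p ^ 2)) *
          (((3 * j / p : ℕ) : ZMod (p ^ 2)) * ((3 * j % p : ℕ) : ZMod (p ^ 2))⁻¹)) := by
    intro j hj
    have h1 : ((3 * j % p : ℕ) : ZMod (p ^ 2)) * ((3 * j % p : ℕ) : ZMod (p ^ 2))⁻¹ = 1 :=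
      ZMod.mul_inv_of_unit _ (hunit_r j hj)
    have h2 : 3 * j % p + p * (3 * j / p) = 3 * j := Nat.mod_add_div (3 * j) p
    calc ((3 * j : ℕ) : ZMod (p ^ 2))
        = ((3 * j % p + p * (3 * j / p) : ℕ) : ZMod (p ^ 2)) := by rw [h2]
      _ = _ := by
          push_cast
          linear_combination (-((p : ZMod (p ^ 2)) * ((3 * j / p : ℕ) : ZMod (p ^ 2)))) * h1
  -- inverse of 3 mod p, as a natural number
  have h3 : (3 : ZMod p) ≠ 0 := by
    intro h
    apply hp3
    have h' : ((3 : ℕ) : ZMod p) = 0 := by exact_mod_cast h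
    exact (ZMod.natCast_eq_zero_iff 3 p).1 h'
  obtain ⟨t, ht⟩ : ∃ t, 3 * t ≡ 1 [MOD p] := by
    refine ⟨((3 : ZMod p)⁻¹).val, ?_⟩
    rw [← ZMod.natCast_eq_natCast_iff]
    push_cast [ZMod.natCast_val, ZMod.cast_id]
    exact mul_inv_cancel₀ h3
  -- the bijection j ↦ 3*j % p on I
  have hbij : ∏ j ∈ I, ((3 * j % p : ℕ) : ZMod (p ^ 2)) = ∏ j ∈ I, (j : ZMod (p ^ 2)) := by
    refine Finset.prod_nbij' (fun j => 3 * j % p) (fun a => t * a % p) ?_ ?_ ?_ ?_ ?_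
    · intro j hj
      rw [hI, Finset.mem_Ico] at hj ⊢
      have hlt : 3 * j % p < p := Nat.mod_lt _ (by omega)
      have hne : 3 * j % p ≠ 0 := fun h => hpj j (by rw [hI, Finset.mem_Ico]; omega)
        (Nat.dvd_of_mod_eq_zero h)
      show 1 ≤ 3 * j % p ∧ 3 * j % p < p
      omega
    · intro a ha
      rw [hI, Finset.mem_Ico] at ha ⊢
      have hlt : t * a % p < p := Nat.mod_lt _ (by omega)
      have hne : t * a % p ≠ 0 := by
        intro h
        have hd : p ∣ t * a := Nat.dvd_of_mod_eq_zero h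
        have hd3 : p ∣ 3 * t * a := by
          rw [mul_assoc]; exact Dvd.dvd.mul_left hd 3
        have hme : 3 * t * a ≡ 1 * a [MOD p] := Nat.ModEq.mul_right a ht
        rw [one_mul] at hme
        have heq : 3 * t * a % p = a % p := hme
        have hz : a % p = 0 := by rw [← heq]; exact Nat.mod_eq_zero_of_dvd hd3
        rw [Nat.mod_eq_of_lt (show a < p by omega)] at hz
        omega
      show 1 ≤ t * a % p ∧ t * a % p < p
      omega
    · intro j hj
      rw [hI, Finset.mem_Ico] at hj
      have h1 : t * (3 * j % p) ≡ t * (3 * j) [MOD p] :=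
        Nat.ModEq.mul_left t (Nat.mod_modEq (3 * j) p)
      have h2 : t * (3 * j) ≡ 1 * j [MOD p] := by
        have : t * (3 * j) = 3 * t * j := by ring
        rw [this]
        exact Nat.ModEq.mul_right j ht
      have h3' : t * (3 * j % p) ≡ j [MOD p] := (h1.trans h2).trans (by rw [one_mul])
      have heq : t * (3 * j % p) % p = j % p := h3'
      simpa [Nat.mod_eq_of_lt (show j < p by omega)] using heq
    · intro a ha
      rw [hI, Finset.mem_Ico] at ha
      have h1 : 3 * (t * a % p) ≡ 3 * (t * a) [MOD p] :=
        Nat.ModEq.mul_left 3 (Nat.mod_modEq (t * a) p)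
      have h2 : 3 * (t * a) ≡ 1 * a [MOD p] := by
        have : 3 * (t * a) = 3 * t * a := by ring
        rw [this]
        exact Nat.ModEq.mul_right a ht
      have h3' : 3 * (t * a % p) ≡ a [MOD p] := (h1.trans h2).trans (by rw [one_mul])
      have heq : 3 * (t * a % p) % p = a % p := h3'
      simpa [Nat.mod_eq_of_lt (show a < p by omega)] using heq
    · intro j hj; rfl
  -- key identity in ZMod (p^2)
  have hcard : I.card = p - 1 := by rw [hI, Nat.card_Ico]
  have keyL : (3 : ZMod (p^2))^(p-1) * ∏ j ∈ I, (j : ZMod (p^2))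
      = ∏ j ∈ I, ((3 * j : ℕ) : ZMod (p^2)) := by
    have hc : ∀ j ∈ I, ((3*j : ℕ) : ZMod (p^2)) = 3 * (j : ZMod (p^2)) := by
      intro j hj; push_cast; ring
    rw [Finset.prod_congr rfl hc, Finset.prod_mul_distrib, Finset.prod_const, hcard]
  have key : (3 : ZMod (p^2))^(p-1) * ∏ j ∈ I, (j : ZMod (p^2))
      = (∏ j ∈ I, (j : ZMod (p^2))) *
        (1 + (p : ZMod (p^2)) * ∑ j ∈ I,
          (((3*j/p : ℕ) : ZMod (p^2)) * ((3*j%p : ℕ) : ZMod (p^2))⁻¹)) := by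
    rw [keyL, Finset.prod_congr rfl hlift, Finset.prod_mul_distrib, hbij,
      aux_prod_one_add _ hpp]
  have hunit_prod : IsUnit (∏ j ∈ I, (j : ZMod (p^2))) := by
    rw [← Nat.cast_prod]
    refine (ZMod.isUnit_iff_coprime _ _).2 (Nat.Coprime.prod_left ?_)
    intro j hj
    rw [hI, Finset.mem_Ico] at hj
    refine Nat.Coprime.pow_right _ (Nat.Coprime.symm ((hp'.coprime_iff_not_dvd).2 ?_))
    intro hd
    have := Nat.le_of_dvd (by omega) hd; omega
  have key2 : (3 : ZMod (p^2))^(p-1)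
      = 1 + (p : ZMod (p^2)) * ∑ j ∈ I,
          (((3*j/p : ℕ) : ZMod (p^2)) * ((3*j%p : ℕ) : ZMod (p^2))⁻¹) := by
    apply hunit_prod.mul_left_cancel
    linear_combination key
  -- Fermat quotient
  have h1le : 1 ≤ 3^(p-1) := Nat.one_le_pow _ _ (by norm_num)
  have hfermat : (3 : ZMod p)^(p-1) = 1 := ZMod.pow_card_sub_one_eq_one h3
  have hdvd : p ∣ 3^(p-1) - 1 := by
    apply (ZMod.natCast_eq_zero_iff _ _).1
    push_cast [Nat.cast_sub h1le]
    simp [hfermat]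
  have hq : 3^(p-1) = 1 + p * ((3^(p-1) - 1)/p) := by
    rw [Nat.mul_div_cancel' hdvd]; omega
  obtain ⟨s, hs⟩ := ZMod.natCast_zmod_surjective
    (∑ j ∈ I, (((3*j/p : ℕ) : ZMod (p^2)) * ((3*j%p : ℕ) : ZMod (p^2))⁻¹))
  have key3 : ((1 + p * ((3^(p-1)-1)/p) : ℕ) : ZMod (p^2)) = ((1 + p * s : ℕ) : ZMod (p^2)) := by
    rw [← hq]
    push_cast
    rw [key2, hs]
  have key5 : ((3^(p-1)-1)/p) ≡ s [MOD p] := by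
    have h := (ZMod.natCast_eq_natCast_iff _ _ _).1 key3
    have h' : p * ((3^(p-1)-1)/p) ≡ p * s [MOD p^2] := h.add_left_cancel' 1
    rw [sq] at h'
    exact Nat.ModEq.mul_left_cancel' hp'.ne_zero h'
  have hqs : (((3^(p-1)-1)/p : ℕ) : ZMod p) = (s : ZMod p) :=
    (ZMod.natCast_eq_natCast_iff _ _ _).2 key5
  -- push s down to ZMod p
  have hsf : (s : ZMod p) = ∑ j ∈ I, ((3*j/p : ℕ) : ZMod p) * ((3 : ZMod p) * (j : ZMod p))⁻¹ := by
    have hmap : (ZMod.castHom (dvd_pow_self p (two_ne_zero)) (ZMod p)) ((s : ZMod (p^2)))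
        = (s : ZMod p) := map_natCast _ s
    rw [← hmap, hs, map_sum]
    refine Finset.sum_congr rfl fun j hj => ?_
    rw [map_mul, map_natCast]
    congr 1
    have h1 : ((3*j%p : ℕ) : ZMod (p^2)) * ((3*j%p : ℕ) : ZMod (p^2))⁻¹ = 1 :=
      ZMod.mul_inv_of_unit _ (hunit_r j hj)
    have h2 := congrArg (ZMod.castHom (dvd_pow_self p (two_ne_zero)) (ZMod p)) h1
    rw [map_mul, map_natCast, map_one] at h2
    have h3' : ((3*j%p : ℕ) : ZMod p) = (3 : ZMod p) * (j : ZMod p) := by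
      rw [ZMod.natCast_mod]; push_cast; ring
    rw [h3'] at h2
    exact (inv_eq_of_mul_eq_one_right h2).symm
  -- evaluate the quotients on the three intervals
  have hsplitA : ∑ j ∈ Finset.Ico 1 (m+1),
      ((3*j/p : ℕ) : ZMod p) * ((3 : ZMod p) * (j : ZMod p))⁻¹ = 0 := by
    refine Finset.sum_eq_zero fun j hj => ?_
    rw [Finset.mem_Ico] at hj
    have hd : 3*j/p = 0 := Nat.div_eq_of_lt (by omega)
    rw [hd]; simp
  have hsplitB : ∀ j ∈ Finset.Ico (m+1) (p-m),
      ((3*j/p : ℕ) : ZMod p) * ((3 : ZMod p) * (j : ZMod p))⁻¹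
        = ((3 : ZMod p) * (j : ZMod p))⁻¹ := by
    intro j hj
    rw [Finset.mem_Ico] at hj
    have hd : 3*j/p = 1 := Nat.div_eq_of_lt_le (by omega) (by omega)
    rw [hd]; simp
  have hsplitC : ∀ j ∈ Finset.Ico (p-m) p,
      ((3*j/p : ℕ) : ZMod p) * ((3 : ZMod p) * (j : ZMod p))⁻¹
        = 2 * ((3 : ZMod p) * (j : ZMod p))⁻¹ := by
    intro j hj
    rw [Finset.mem_Ico] at hj
    have hd : 3*j/p = 2 := Nat.div_eq_of_lt_le (by omega) (by omega)
    rw [hd]; push_cast; ring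
  have hdecomp : (s : ZMod p)
      = (∑ j ∈ Finset.Ico (m+1) (p-m), ((3:ZMod p)*(j:ZMod p))⁻¹)
        + 2 * ∑ j ∈ Finset.Ico (p-m) p, ((3:ZMod p)*(j:ZMod p))⁻¹ := by
    rw [hsf, hI,
      ← Finset.sum_Ico_consecutive _ (show 1 ≤ m+1 by omega) (show m+1 ≤ p by omega),
      ← Finset.sum_Ico_consecutive _ (show m+1 ≤ p-m by omega) (show p-m ≤ p by omega),
      hsplitA, zero_add, Finset.sum_congr rfl hsplitB, Finset.sum_congr rfl hsplitC,
      ← Finset.mul_sum]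
  -- convert (3*j)⁻¹ sums into 3⁻¹ * harmonic sums
  have hsum3 : ∀ (a b : ℕ), ∑ j ∈ Finset.Ico a b, ((3:ZMod p)*(j:ZMod p))⁻¹
      = (3:ZMod p)⁻¹ * ∑ j ∈ Finset.Ico a b, ((j:ZMod p))⁻¹ := by
    intro a b
    rw [Finset.mul_sum]
    exact Finset.sum_congr rfl fun j _ => by rw [mul_inv]
  -- the full harmonic sum vanishes
  have h2ne : (2 : ZMod p) ≠ 0 := by
    intro h
    apply hp2
    have h' : ((2 : ℕ) : ZMod p) = 0 := by exact_mod_cast h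
    exact (ZMod.natCast_eq_zero_iff 2 p).1 h'
  have hcastsub : ∀ a : ℕ, a ≤ p → ((p - a : ℕ) : ZMod p) = -(a : ZMod p) := by
    intro a ha
    rw [Nat.cast_sub ha, ZMod.natCast_self, zero_sub]
  have hH0 : ∑ j ∈ Finset.Ico 1 p, ((j : ZMod p))⁻¹ = 0 := by
    have hrev : ∑ j ∈ Finset.Ico 1 p, ((j : ZMod p))⁻¹
        = ∑ j ∈ Finset.Ico 1 p, -(((j : ZMod p))⁻¹) := by
      refine Finset.sum_nbij' (fun j => p - j) (fun j => p - j) ?_ ?_ ?_ ?_ ?_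
      · intro a ha; rw [Finset.mem_Ico] at ha
        show p - a ∈ Finset.Ico 1 p; rw [Finset.mem_Ico]; omega
      · intro a ha; rw [Finset.mem_Ico] at ha
        show p - a ∈ Finset.Ico 1 p; rw [Finset.mem_Ico]; omega
      · intro a ha; rw [Finset.mem_Ico] at ha; show p - (p - a) = a; omega
      · intro a ha; rw [Finset.mem_Ico] at ha; show p - (p - a) = a; omega
      · intro a ha
        rw [Finset.mem_Ico] at ha
        show ((a : ℕ) : ZMod p)⁻¹ = -(((p - a : ℕ) : ZMod p)⁻¹)
        rw [hcastsub a (by omega)]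
        rw [inv_neg, neg_neg]
    rw [Finset.sum_neg_distrib] at hrev
    have h2S : (2 : ZMod p) * ∑ j ∈ Finset.Ico 1 p, ((j : ZMod p))⁻¹ = 0 := by
      linear_combination hrev
    exact (mul_eq_zero.1 h2S).resolve_left h2ne
  -- reflection of the top interval
  have hHrev : ∑ j ∈ Finset.Ico (p-m) p, ((j : ZMod p))⁻¹
      = -∑ j ∈ Finset.Ico 1 (m+1), ((j : ZMod p))⁻¹ := by
    rw [← Finset.sum_neg_distrib]
    refine Finset.sum_nbij' (fun j => p - j) (fun j => p - j) ?_ ?_ ?_ ?_ ?_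
    · intro a ha; rw [Finset.mem_Ico] at ha
      show p - a ∈ Finset.Ico 1 (m+1); rw [Finset.mem_Ico]; omega
    · intro a ha; rw [Finset.mem_Ico] at ha
      show p - a ∈ Finset.Ico (p-m) p; rw [Finset.mem_Ico]; omega
    · intro a ha; rw [Finset.mem_Ico] at ha; show p - (p - a) = a; omega
    · intro a ha; rw [Finset.mem_Ico] at ha; show p - (p - a) = a; omega
    · intro a ha
      rw [Finset.mem_Ico] at ha
      show ((a : ℕ) : ZMod p)⁻¹ = -(((p - a : ℕ) : ZMod p)⁻¹)
      rw [hcastsub a (by omega), inv_neg, neg_neg]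
  -- tail sum
  have htail : ∑ j ∈ Finset.Ico (m+1) p, ((j:ZMod p))⁻¹
      = -∑ j ∈ Finset.Ico 1 (m+1), ((j:ZMod p))⁻¹ := by
    have hc := Finset.sum_Ico_consecutive (fun j => ((j:ZMod p))⁻¹)
      (show 1 ≤ m+1 by omega) (show m+1 ≤ p by omega)
    rw [hH0] at hc
    linear_combination hc
  have hmid := Finset.sum_Ico_consecutive (fun j => ((j:ZMod p))⁻¹)
    (show m+1 ≤ p-m by omega) (show p-m ≤ p by omega)
  -- put everything together
  have hs_val : (s : ZMod p)
      = -(2 * (3:ZMod p)⁻¹ * ∑ j ∈ Finset.Ico 1 (m+1), ((j:ZMod p))⁻¹) := by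
    rw [hdecomp, hsum3, hsum3]
    rw [hHrev] at hmid ⊢
    rw [htail] at hmid
    -- hmid : ∑ mid + (-H) = -H  →  ∑ mid = 0
    have hmid0 : ∑ j ∈ Finset.Ico (m+1) (p-m), ((j:ZMod p))⁻¹ = 0 := by
      linear_combination hmid
    rw [hmid0]
    ring
  have hIcc : Finset.Icc 1 (p/3) = Finset.Ico 1 (m+1) := by
    rw [← hm]; exact (Finset.Ico_add_one_right_eq_Icc 1 m).symm
  rw [hIcc, hqs, hs_val]
  field_simp
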